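/- Let A be an m×q dual complex matrix and B a q×n dual complex matrix, let N_A be an NDMPI of A, N_B an NDMPI of B, and Z an NDMPI of A·B. Then Z = N_B·N_A if and only if there exists a matrix X satisfying B·X·B = B·N_B·B, X·B·X = X, and (B·X)* = B·X (a {1,2,3}-inverse of B) such that Z = N_B·B·X·N_A. -/

import Mathlib

open Matrix

/-- The dual complex numbers ℂ[ε] with ε² = 0 (dual numbers over ℂ). -/
abbrev DualComplex := DualNumber ℂ

/-- Conjugation on dual complex numbers: star (a + b·ε) = (conj a) + (conj b)·ε. -/
noncomputable instance : StarRing DualComplex where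
  star x := ⟨star x.fst, star x.snd⟩
  star_involutive x := TrivSqZeroExt.ext (star_star x.fst) (star_star x.snd)
  star_mul x y := TrivSqZeroExt.ext
    (by change _ = star y.fst * star x.fst; simp [TrivSqZeroExt.fst_mul, mul_comm])
    (by change _ = star y.fst • star x.snd + MulOpposite.op (star x.fst) • star y.snd; simp [TrivSqZeroExt.snd_mul]; ring)
  star_add x y := TrivSqZeroExt.ext (by change _ = star x.fst + star y.fst; simp) (by change _ = star x.snd + star y.snd; simp)

/-- `X` is a new dual Moore–Penrose inverse (NDMPI) of `M`:
`M*·M·X·M·M* = M*·M·M*`, `X·M·X = X`, `(M·X)* = M·X`, `(X·M)* = X·M`. -/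
def IsNDMPI {m n : ℕ} (M : Matrix (Fin m) (Fin n) DualComplex)
    (X : Matrix (Fin n) (Fin m) DualComplex) : Prop :=
  Mᴴ * M * X * M * Mᴴ = Mᴴ * M * Mᴴ ∧
  X * M * X = X ∧
  (M * X)ᴴ = M * X ∧
  (X * M)ᴴ = X * M

/-- `Z = N_B·N_A` iff there exists a {1,2,3}-inverse `X` of `B`
such that `Z = N_B·B·X·N_A`. -/
theorem stmt_14 {m q n : ℕ} (A : Matrix (Fin m) (Fin q) DualComplex)
    (B : Matrix (Fin q) (Fin n) DualComplex)
    (NA : Matrix (Fin q) (Fin m) DualComplex) (hNA : IsNDMPI A NA)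
    (NB : Matrix (Fin n) (Fin q) DualComplex) (hNB : IsNDMPI B NB)
    (Z : Matrix (Fin n) (Fin m) DualComplex) (hZ : IsNDMPI (A * B) Z) :
    Z = NB * NA ↔
      ∃ X : Matrix (Fin n) (Fin q) DualComplex,
        (B * X * B = B * NB * B ∧ X * B * X = X ∧ (B * X)ᴴ = B * X) ∧
        Z = NB * B * X * NA := by
  obtain ⟨hB1, hB2, hB3, hB4⟩ := hNB
  constructor
  · intro h
    refine ⟨NB, ⟨rfl, hB2, hB3⟩, ?_⟩
    rw [hB2, h]
  · rintro ⟨X, ⟨hx1, hx2, hx3⟩, rfl⟩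
    have hBN : NBᴴ * Bᴴ = B * NB := by rw [← conjTranspose_mul]; exact hB3
    have hXB : Xᴴ * Bᴴ = B * X := by rw [← conjTranspose_mul]; exact hx3
    have e2L : NB * NBᴴ * Bᴴ = NB := by
      rw [Matrix.mul_assoc, hBN, ← Matrix.mul_assoc, hB2]
    have e1L : Bᴴ * B * X = Bᴴ * B * NB := by
      have h := congrArg conjTranspose hx1
      simp only [conjTranspose_mul] at h
      rw [hXB, hBN] at h
      simpa [Matrix.mul_assoc] using h
    have key : NB * B * X = NB * B * NB := by
      calc NB * B * X = NB * NBᴴ * Bᴴ * B * X := by rw [e2L]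
        _ = NB * NBᴴ * (Bᴴ * B * X) := by simp only [Matrix.mul_assoc]
        _ = NB * NBᴴ * (Bᴴ * B * NB) := by rw [e1L]
        _ = NB * NBᴴ * Bᴴ * B * NB := by simp only [Matrix.mul_assoc]
        _ = NB * B * NB := by rw [e2L]
    rw [key, hB2]
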